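/- The set C_ℓ = A_ℓ ∪ B_ℓ, where B_ℓ = {ab^m a : 1 ≤ m ≤ ℓ} and A_ℓ = {ab^m a a a b^n a : 1 ≤ m,n ≤ ℓ}, is a code over the alphabet {a,b}: every word in C_ℓ* has a unique factorization into elements of C_ℓ. -/

import Mathlib

/-- The codeword `a b^m a` over Σ = {a,b}, with `a = false`, `b = true`. -/
def wordV (m : ℕ) : List Bool := false :: (List.replicate m true ++ [false])

/-- The codeword `a b^m a a a b^n a`. -/
def wordE (m n : ℕ) : List Bool :=
  false :: (List.replicate m true ++ [false, false, false] ++ List.replicate n true ++ [false])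

/-- A set of words is a code if every word in its Kleene star factors uniquely. -/
def IsCode (C : Set (List Bool)) : Prop :=
  ∀ l₁ l₂ : List (List Bool), (∀ w ∈ l₁, w ∈ C) → (∀ w ∈ l₂, w ∈ C) →
    l₁.flatten = l₂.flatten → l₁ = l₂

/-- `C_ℓ = A_ℓ ∪ B_ℓ`. -/
def Cletters (ℓ : ℕ) : Set (List Bool) :=
  {w | ∃ m, 1 ≤ m ∧ m ≤ ℓ ∧ w = wordV m} ∪
  {w | ∃ m n, 1 ≤ m ∧ m ≤ ℓ ∧ 1 ≤ n ∧ n ≤ ℓ ∧ w = wordE m n}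

/-- A tail is good if it is empty or starts with `false, true`. -/
def GoodTail (l : List Bool) : Prop := l = [] ∨ ∃ s, l = false :: true :: s

lemma rep_false_inj : ∀ m m' (s t : List Bool),
    List.replicate m true ++ (false :: s) = List.replicate m' true ++ (false :: t) →
    m = m' ∧ s = t := by
  intro m
  induction m with
  | zero =>
    intro m' s t h
    cases m' with
    | zero => simpa using h
    | succ k => simp [List.replicate_succ] at h
  | succ k ih =>
    intro m' s t h
    cases m' with
    | zero => simp [List.replicate_succ] at h
    | succ k' =>
      simp only [List.replicate_succ, List.cons_append, List.cons.injEq, true_and] at h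
      obtain ⟨hm, hs⟩ := ih k' s t h
      exact ⟨by omega, hs⟩

lemma mem_start (ℓ : ℕ) {w : List Bool} (hw : w ∈ Cletters ℓ) :
    ∃ s, w = false :: true :: s := by
  rcases hw with ⟨m, hm1, _, rfl⟩ | ⟨m, n, hm1, _, _, _, rfl⟩
  · obtain ⟨k, rfl⟩ : ∃ k, m = k + 1 := ⟨m - 1, by omega⟩
    exact ⟨List.replicate k true ++ [false], by simp [wordV, List.replicate_succ]⟩
  · obtain ⟨k, rfl⟩ : ∃ k, m = k + 1 := ⟨m - 1, by omega⟩
    exact ⟨List.replicate k true ++ [false, false, false] ++ List.replicate n true ++ [false], by simp [wordE, List.replicate_succ]⟩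

lemma good_join (ℓ : ℕ) (l : List (List Bool)) (hl : ∀ w ∈ l, w ∈ Cletters ℓ) :
    GoodTail l.flatten := by
  cases l with
  | nil => exact Or.inl rfl
  | cons w rest =>
    obtain ⟨s, hs⟩ := mem_start ℓ (hl w (by simp))
    exact Or.inr ⟨s ++ rest.flatten, by simp [hs]⟩

lemma cancel (ℓ : ℕ) {w₁ w₂ : List Bool} (h₁ : w₁ ∈ Cletters ℓ) (h₂ : w₂ ∈ Cletters ℓ)
    {r₁ r₂ : List Bool} (g₁ : GoodTail r₁) (g₂ : GoodTail r₂)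
    (h : w₁ ++ r₁ = w₂ ++ r₂) : w₁ = w₂ ∧ r₁ = r₂ := by
  have bad : ∀ r : List Bool, GoodTail r → ∀ n t, 1 ≤ n →
      r ≠ false :: false :: (List.replicate n true ++ t) := by
    intro r gr n t hn hr
    rcases gr with rfl | ⟨s, rfl⟩
    · exact absurd hr (by simp)
    · obtain ⟨k, rfl⟩ : ∃ k, n = k + 1 := ⟨n - 1, by omega⟩
      simp [List.replicate_succ] at hr
  rcases h₁ with ⟨m, hm1, _, rfl⟩ | ⟨m, n, hm1, _, hn1, _, rfl⟩ <;>
    rcases h₂ with ⟨m', hm1', _, rfl⟩ | ⟨m', n', hm1', _, hn1', _, rfl⟩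
  · -- V V
    simp only [wordV, List.cons_append, List.append_assoc, List.singleton_append,
      List.cons.injEq, true_and] at h
    obtain ⟨hm, hr⟩ := rep_false_inj _ _ _ _ h
    subst hm; exact ⟨rfl, hr⟩
  · -- V E
    simp only [wordV, wordE, List.cons_append, List.append_assoc, List.singleton_append,
      List.cons.injEq, true_and] at h
    obtain ⟨hm, hr⟩ := rep_false_inj _ _ _ _ h
    exact absurd hr (by simpa using bad r₁ g₁ n' (false :: r₂) hn1')
  · -- E V
    simp only [wordV, wordE, List.cons_append, List.append_assoc, List.singleton_append,
      List.cons.injEq, true_and] at h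
    obtain ⟨hm, hr⟩ := rep_false_inj _ _ _ _ h
    exact absurd hr.symm (by simpa using bad r₂ g₂ n (false :: r₁) hn1)
  · -- E E
    simp only [wordE, List.cons_append, List.append_assoc, List.singleton_append,
      List.cons.injEq, true_and] at h
    obtain ⟨hm, hr⟩ := rep_false_inj _ _ _ _ h
    simp only [List.cons.injEq, true_and] at hr
    obtain ⟨hn, hr'⟩ := rep_false_inj _ _ _ _ hr
    subst hm; subst hn; exact ⟨rfl, hr'⟩

theorem stmt0 (ℓ : ℕ) : IsCode (Cletters ℓ) := by
  intro l₁
  induction l₁ with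
  | nil =>
    intro l₂ _ h₂ hj
    cases l₂ with
    | nil => rfl
    | cons w rest =>
      obtain ⟨s, hs⟩ := mem_start ℓ (h₂ w (by simp))
      simp [hs] at hj
  | cons w rest ih =>
    intro l₂ h₁ h₂ hj
    cases l₂ with
    | nil =>
      obtain ⟨s, hs⟩ := mem_start ℓ (h₁ w (by simp))
      simp [hs] at hj
    | cons w' rest' =>
      simp only [List.flatten_cons] at hj
      obtain ⟨hw, hr⟩ := cancel ℓ (h₁ w (by simp)) (h₂ w' (by simp))
        (good_join ℓ rest (fun v hv => h₁ v (by simp [hv])))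
        (good_join ℓ rest' (fun v hv => h₂ v (by simp [hv]))) hj
      subst hw
      rw [ih rest' (fun v hv => h₁ v (by simp [hv])) (fun v hv => h₂ v (by simp [hv])) hr]
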